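/- Let n ≥ 1 and A ∈ GL_n(ℂ) with minimal polynomial m(X) of degree p, and let C_m be the companion matrix of m. Then there exist matrices W ∈ Mat_{p×n}(ℂ) and S ∈ Mat_{n×p}(ℂ) such that W·S = I_p and for every polynomial q ∈ ℂ[X] one has q(C_m) = W · q(A) · S. -/

import Mathlib

open Polynomial Matrix


/-- The companion matrix of the monic polynomial
`X^p − c_{p−1}X^{p−1} − ⋯ − c_1 X − c_0` (where `c i` is the coefficient `c_i`):
its first column is `(c_{p−1}, …, c_0)ᵗ`, its `(i, i+1)` entries are `1`,
and all other entries are `0`. -/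
def companionOf (p : ℕ) (c : Fin p → ℂ) : Matrix (Fin p) (Fin p) ℂ :=
  Matrix.of fun i j : Fin p =>
    if (j : ℕ) = (i : ℕ) + 1 then 1 else if (j : ℕ) = 0 then c i.rev else 0

/-- A matrix whose minimal polynomial has degree `p` admits a vector not annihilated by
any nonzero polynomial of degree `< p`. -/
lemma exists_cyclic_vec {n : ℕ} (A : Matrix (Fin n) (Fin n) ℂ) {p : ℕ}
    (hp : 1 ≤ p) (hdeg : (minpoly ℂ A).natDegree = p) :
    ∃ v : Fin n → ℂ, ∀ q : Polynomial ℂ,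
      q.natDegree < p → (Polynomial.aeval A q) *ᵥ v = 0 → q = 0 := by
  classical
  have hint : IsIntegral ℂ A := Algebra.IsIntegral.isIntegral A
  set m := minpoly ℂ A with hmm
  have hm0 : aeval A m = 0 := minpoly.aeval ℂ A
  have hmne : m ≠ 0 := minpoly.ne_zero hint
  set K : ℂ → Submodule ℂ (Fin n → ℂ) :=
    fun z => LinearMap.ker (Matrix.toLin' (aeval A (m /ₘ (X - C z)))) with hK
  have hKne : ∀ z ∈ m.roots, K z ≠ ⊤ := by
    intro z hz hKtop
    have hdvd : (X - C z) ∣ m := dvd_iff_isRoot.mpr (isRoot_of_mem_roots hz)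
    set d := m /ₘ (X - C z) with hd
    have hmd : m = (X - C z) * d := by
      conv_lhs => rw [← modByMonic_add_div m (X - C z)]
      rw [(modByMonic_eq_zero_iff_dvd (monic_X_sub_C z)).mpr hdvd, zero_add]
    have hdne : d ≠ 0 := by
      intro h0; rw [h0, mul_zero] at hmd; exact hmne hmd
    have h0 : aeval A d = 0 := by
      have : Matrix.toLin' (aeval A d) = 0 := LinearMap.ker_eq_top.mp hKtop
      exact Matrix.toLin'.injective (by simpa using this)
    have hmdvd : m ∣ d := minpoly.dvd ℂ A h0
    have := Polynomial.natDegree_le_of_dvd hmdvd hdne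
    have hdd : d.natDegree = p - 1 := by
      rw [hd, natDegree_divByMonic m (monic_X_sub_C z), natDegree_X_sub_C, hdeg]
    omega
  have hne : (⋃ z : ↥(m.roots.toFinset), ((K z) : Set (Fin n → ℂ))) ≠ Set.univ := by
    intro hu
    obtain ⟨z, hz⟩ := Subspace.exists_eq_top_of_iUnion_eq_univ hu
    exact hKne z (Multiset.mem_toFinset.mp z.2) hz
  obtain ⟨v, hv⟩ := (Set.ne_univ_iff_exists_notMem _).mp hne
  refine ⟨v, ?_⟩
  intro q hqdeg hq0
  by_contra hqne
  set g := EuclideanDomain.gcd m q with hg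
  have hgm : g ∣ m := EuclideanDomain.gcd_dvd_left _ _
  have hgq : g ∣ q := EuclideanDomain.gcd_dvd_right _ _
  have hgne : g ≠ 0 := fun h0 => hqne (EuclideanDomain.gcd_eq_zero_iff.mp h0).2
  have hgv : aeval A g *ᵥ v = 0 := by
    rw [hg, EuclideanDomain.gcd_eq_gcd_ab m q, map_add, _root_.map_mul, _root_.map_mul, hm0,
      zero_mul, zero_add, ← _root_.map_mul, mul_comm q _, _root_.map_mul,
      ← Matrix.mulVec_mulVec, hq0,
      Matrix.mulVec_zero]
  have hgdeg : g.natDegree < p := lt_of_le_of_lt (Polynomial.natDegree_le_of_dvd hgq hqne) hqdeg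
  obtain ⟨h, hmh⟩ := hgm
  have hhne : h ≠ 0 := by rintro rfl; rw [mul_zero] at hmh; exact hmne hmh
  have hhdeg : 0 < h.degree := by
    have hnd := Polynomial.natDegree_mul hgne hhne
    rw [← hmh, hdeg] at hnd
    have : 1 ≤ h.natDegree := by omega
    exact Polynomial.natDegree_pos_iff_degree_pos.mp this
  obtain ⟨z, hz⟩ := Complex.exists_root hhdeg
  have hzm : z ∈ m.roots := by
    rw [Polynomial.mem_roots hmne]
    rw [hmh]
    simp [Polynomial.IsRoot, hz.eq_zero]
  obtain ⟨h', hh'⟩ := (dvd_iff_isRoot).mpr hz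
  have hquot : m /ₘ (X - C z) = g * h' := by
    rw [hmh, hh', show g * ((X - C z) * h') = (X - C z) * (g * h') by ring]
    exact mul_divByMonic_cancel_left _ (monic_X_sub_C z)
  have hmem : v ∈ K z := by
    simp only [hK, LinearMap.mem_ker, Matrix.toLin'_apply, hquot]
    rw [mul_comm g h', _root_.map_mul, ← Matrix.mulVec_mulVec, hgv, Matrix.mulVec_zero]
  exact hv (Set.mem_iUnion.mpr ⟨⟨z, Multiset.mem_toFinset.mpr hzm⟩, hmem⟩)

/-- if `A` has minimal polynomial `m = X^p − c_{p−1}X^{p−1} − ⋯ − c_0` with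
companion matrix `C_m`, then there are matrices `W ∈ Mat_{p×n}(ℂ)` and `S ∈ Mat_{n×p}(ℂ)`
with `W·S = I_p` and `q(C_m) = W·q(A)·S` for every polynomial `q ∈ ℂ[X]`. -/
theorem exists_WS_companion_aeval (n : ℕ) (hn : 1 ≤ n)
    (A : Matrix (Fin n) (Fin n) ℂ) (hA : IsUnit A) (p : ℕ) (hp : 1 ≤ p)
    (c : Fin p → ℂ)
    (hm : minpoly ℂ A =
      Polynomial.X ^ p - ∑ i : Fin p, Polynomial.C (c i) * Polynomial.X ^ (i : ℕ)) :
    ∃ (W : Matrix (Fin p) (Fin n) ℂ) (S : Matrix (Fin n) (Fin p) ℂ),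
      W * S = 1 ∧
      ∀ q : Polynomial ℂ,
        Polynomial.aeval (companionOf p c) q = W * Polynomial.aeval A q * S := by
  classical
  have hm0 : aeval A (minpoly ℂ A) = 0 := minpoly.aeval ℂ A
  have hdeg : (minpoly ℂ A).natDegree = p := by
    rw [hm, natDegree_sub_eq_left_of_natDegree_lt, natDegree_X_pow]
    rw [natDegree_X_pow]
    refine lt_of_le_of_lt
      (Polynomial.natDegree_sum_le_of_forall_le _ _ fun i _ => ?_) (show p - 1 < p by omega)
    exact le_trans (natDegree_C_mul_le _ _)
      (by rw [natDegree_X_pow]; omega)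
  obtain ⟨v, hv⟩ := exists_cyclic_vec A hp hdeg
  have hAp : A ^ p = ∑ l : Fin p, c l • A ^ (l : ℕ) := by
    rw [hm, map_sub, map_pow, aeval_X, map_sum, sub_eq_zero] at hm0
    rw [hm0]
    exact Finset.sum_congr rfl fun l _ => by
      rw [_root_.map_mul, aeval_C, map_pow, aeval_X, ← Algebra.smul_def]
  set u : ℕ → (Fin n → ℂ) := fun k => A ^ k *ᵥ v with hu
  set Cm := companionOf p c with hCmdef
  set S : Matrix (Fin n) (Fin p) ℂ := Matrix.of fun i j => u ((j : Fin p).rev : ℕ) i with hS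
  have hup : ∀ i, u p i = ∑ l : Fin p, c l * u (l : ℕ) i := by
    intro i
    simp only [hu, hAp, Matrix.mulVec, dotProduct, Matrix.sum_apply, Matrix.smul_apply,
      smul_eq_mul, Finset.sum_mul]
    rw [Finset.sum_comm]
    refine Finset.sum_congr rfl fun l _ => ?_
    rw [Finset.mul_sum]
    exact Finset.sum_congr rfl fun k _ => by ring
  have key : A * S = S * Cm := by
    ext i j
    have hL : (A * S) i j = u ((j.rev : ℕ) + 1) i := by
      have h1 : (A * S) i j = (A *ᵥ fun k => S k j) i := by
        simp [Matrix.mul_apply, Matrix.mulVec, dotProduct]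
      rw [h1]
      have h2 : (fun k => S k j) = u (j.rev : ℕ) := rfl
      rw [h2, hu]
      simp only [Matrix.mulVec_mulVec, ← pow_succ']
    rw [hL, Matrix.mul_apply]
    by_cases hj : (j : ℕ) = 0
    · have hrev : (j.rev : ℕ) = p - 1 := by rw [Fin.val_rev]; omega
      have hCm0 : ∀ k : Fin p, Cm k j = c k.rev := by
        intro k
        simp only [hCmdef, companionOf, Matrix.of_apply, hj]
        simp
      simp only [hCm0]
      have h3 : ∑ k : Fin p, S i k * c k.rev = ∑ k : Fin p, c k.rev * u (k.rev : ℕ) i := by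
        refine Finset.sum_congr rfl fun k _ => ?_
        simp [hS, mul_comm]
      rw [h3,
        Fintype.sum_equiv Fin.revPerm (fun k : Fin p => c k.rev * u (k.rev : ℕ) i)
          (fun l : Fin p => c l * u (l : ℕ) i) (fun k => by simp [Fin.revPerm]),
        ← hup, hrev, show p - 1 + 1 = p by omega]
    · -- j ≥ 1
      have hj1 : 1 ≤ (j : ℕ) := by omega
      set k0 : Fin p := ⟨(j : ℕ) - 1, by omega⟩ with hk0
      have hCm1 : ∀ k : Fin p, Cm k j = if k = k0 then 1 else 0 := by
        intro k
        simp only [hCmdef, companionOf, Matrix.of_apply, hj]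
        by_cases hk : k = k0
        · subst hk
          rw [if_pos (by simp only [hk0]; omega), if_pos rfl]
        · rw [if_neg (fun hEq => hk (Fin.ext (by simp only [hk0]; omega)))]
          simp [hk]
      simp only [hCm1, mul_ite, mul_one, mul_zero, Finset.sum_ite_eq', Finset.mem_univ, if_true]
      have : S i k0 = u (k0.rev : ℕ) i := rfl
      rw [this, show (k0.rev : ℕ) = (j.rev : ℕ) + 1 by
        rw [Fin.val_rev, Fin.val_rev]; simp [hk0]; omega]
  have hpow : ∀ k : ℕ, A ^ k * S = S * Cm ^ k := by
    intro k
    induction k with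
    | zero => simp
    | succ k ih =>
      rw [pow_succ', Matrix.mul_assoc, ih, ← Matrix.mul_assoc, key, Matrix.mul_assoc, ← pow_succ']
  have haq : ∀ q : ℂ[X], aeval A q * S = S * aeval Cm q := by
    intro q
    rw [aeval_eq_sum_range (p := q) A, aeval_eq_sum_range (p := q) Cm, Matrix.sum_mul,
      Matrix.mul_sum]
    refine Finset.sum_congr rfl fun k _ => ?_
    rw [Matrix.smul_mul, Matrix.mul_smul, hpow]
  have hker : LinearMap.ker (Matrix.toLin' S) = ⊥ := by
    rw [LinearMap.ker_eq_bot']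
    intro x hx
    rw [Matrix.toLin'_apply] at hx
    set q : ℂ[X] := ∑ j : Fin p, Polynomial.C (x j) * X ^ ((j : Fin p).rev : ℕ) with hqdef
    have hqd : q.natDegree < p :=
      lt_of_le_of_lt (Polynomial.natDegree_sum_le_of_forall_le _ _ fun j _ =>
        le_trans (natDegree_C_mul_le _ _) (by rw [natDegree_X_pow, Fin.val_rev]; omega))
        (show p - 1 < p by omega)
    have hav : aeval A q *ᵥ v = 0 := by
      rw [hqdef, map_sum]
      have hSx : (∑ j : Fin p, aeval A (Polynomial.C (x j) * X ^ ((j : Fin p).rev : ℕ))) *ᵥ v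
          = S *ᵥ x := by
        ext i
        simp only [_root_.map_mul, aeval_C, map_pow, aeval_X, Matrix.mulVec, dotProduct,
          Matrix.sum_apply, ← Algebra.smul_def, Matrix.smul_apply, smul_eq_mul, Finset.sum_mul]
        rw [Finset.sum_comm]
        refine Finset.sum_congr rfl fun j _ => ?_
        simp only [hS, Matrix.of_apply, hu]
        simp only [Matrix.mulVec, dotProduct]
        rw [Finset.sum_mul]
        exact Finset.sum_congr rfl fun k _ => by ring
      rw [hSx, hx]
    have hq0 := hv q hqd hav
    funext j
    have hco := congrArg (fun r : ℂ[X] => r.coeff ((j : Fin p).rev : ℕ)) hq0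
    simp only [hqdef, Polynomial.finset_sum_coeff, Polynomial.coeff_C_mul,
      Polynomial.coeff_X_pow, Polynomial.coeff_zero, mul_ite, mul_one, mul_zero] at hco
    rw [Finset.sum_eq_single j (fun k _ hkj => by
        rw [if_neg (fun hEq => hkj (Fin.rev_injective (Fin.ext hEq.symm)))])
      (fun hmem => absurd (Finset.mem_univ j) hmem), if_pos rfl] at hco
    exact hco
  obtain ⟨gW, hgW⟩ := LinearMap.exists_leftInverse_of_injective (Matrix.toLin' S) hker
  refine ⟨LinearMap.toMatrix' gW, S, ?_, ?_⟩
  · have := congrArg LinearMap.toMatrix' hgW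
    rwa [LinearMap.toMatrix'_comp, LinearMap.toMatrix'_toLin', LinearMap.toMatrix'_id] at this
  · intro q
    have hWS : LinearMap.toMatrix' gW * S = 1 := by
      have := congrArg LinearMap.toMatrix' hgW
      rwa [LinearMap.toMatrix'_comp, LinearMap.toMatrix'_toLin', LinearMap.toMatrix'_id] at this
    rw [Matrix.mul_assoc, haq q, ← Matrix.mul_assoc, hWS, Matrix.one_mul]
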